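/- Let G be a directed graph on vertex set V containing the arc (t,s), with t ≠ s. Then ∑_{F ⊆ V \ {t}} (-1)^{|F|} · N(F) equals the number of Hamiltonian cycles of G containing the arc (t,s), where N(F) denotes the number of out-branchings rooted at s in the graph G with all arcs leaving vertices in F deleted. Equivalently: an out-branching B rooted at s contributes ∑_{F ⊆ sinks(B) \ {t}} (-1)^{|F|}, which is 1 if B is a Hamiltonian path from s to t and 0 otherwise. -/

import Mathlib

open scoped Classical

/-- `X` is an out-branching (spanning arborescence) rooted at `s` in the
    directed graph with arc set a subset of `V × V`. -/
def IsOutBranching {V : Type} (X : Finset (V × V)) (s : V) : Prop :=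
  (∀ v : V, v ≠ s → ∃! e, e ∈ X ∧ e.2 = v) ∧
  (∀ e ∈ X, e.2 ≠ s) ∧
  (∀ v : V, Relation.ReflTransGen (fun a b => (a, b) ∈ X) s v)

/-- Inclusion–exclusion for counting Hamiltonian cycles through the arc (t,s):
    ∑_{F ⊆ V∖{t}} (-1)^{|F|}·N(F), where N(F) counts out-branchings rooted at s
    avoiding arcs leaving F, equals the number of out-branchings rooted at s
    whose unique sink is t (equivalently, Hamiltonian paths from s to t, i.e.
    Hamiltonian cycles of G containing the arc (t,s)). -/
theorem hamiltonian_cycles_inclusion_exclusion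
    {V : Type} [Fintype V] [DecidableEq V]
    (A : Finset (V × V)) (hloop : ∀ e ∈ A, e.1 ≠ e.2)
    (s t : V) (hts : t ≠ s) (hA : (t, s) ∈ A) :
    (∑ F ∈ ((Finset.univ : Finset V).erase t).powerset,
        (-1 : ℤ) ^ F.card *
          ((A.powerset.filter fun X =>
              (∀ e ∈ X, e.1 ∉ F) ∧ IsOutBranching X s).card : ℤ))
    = ((A.powerset.filter fun X =>
          IsOutBranching X s ∧ ∀ v : V, (∀ e ∈ X, e.1 ≠ v) → v = t).card : ℤ) := by
  classical
  set B := A.powerset.filter (fun X => IsOutBranching X s) with hB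
  set sk : Finset (V × V) → Finset V :=
    fun X => Finset.univ.filter (fun v => ∀ e ∈ X, e.1 ≠ v) with hsk
  have hmemsk : ∀ (X : Finset (V × V)) (v : V), v ∈ sk X ↔ ∀ e ∈ X, e.1 ≠ v := by
    intro X v; simp [hsk]
  have step1 : ∀ F : Finset V,
      (A.powerset.filter fun X =>
          (∀ e ∈ X, e.1 ∉ F) ∧ IsOutBranching X s)
      = B.filter (fun X => F ⊆ sk X) := by
    intro F
    rw [hB, Finset.filter_filter]
    refine Finset.filter_congr fun X _ => ?_
    constructor
    · rintro ⟨h1, h2⟩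
      refine ⟨h2, fun v hv => (hmemsk X v).2 (fun e he hev => h1 e he (hev ▸ hv))⟩
    · rintro ⟨h2, h1⟩
      refine ⟨fun e he hef => ((hmemsk X e.1).1 (h1 hef) e he) rfl, h2⟩
  calc (∑ F ∈ ((Finset.univ : Finset V).erase t).powerset,
        (-1 : ℤ) ^ F.card *
          ((A.powerset.filter fun X =>
              (∀ e ∈ X, e.1 ∉ F) ∧ IsOutBranching X s).card : ℤ))
      = ∑ F ∈ ((Finset.univ : Finset V).erase t).powerset, ∑ X ∈ B,
          (-1 : ℤ) ^ F.card * (if F ⊆ sk X then (1 : ℤ) else 0) := by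
        refine Finset.sum_congr rfl fun F _ => ?_
        rw [step1 F, ← Finset.mul_sum, Finset.sum_boole]
    _ = ∑ X ∈ B, ∑ F ∈ ((Finset.univ : Finset V).erase t).powerset,
          (-1 : ℤ) ^ F.card * (if F ⊆ sk X then (1 : ℤ) else 0) := Finset.sum_comm
    _ = ∑ X ∈ B, (if (sk X).erase t = ∅ then (1 : ℤ) else 0) := by
        refine Finset.sum_congr rfl fun X _ => ?_
        have hpow : (((Finset.univ : Finset V).erase t).powerset.filter
            (fun F => F ⊆ sk X)) = ((sk X).erase t).powerset := by
          ext F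
          simp only [Finset.mem_filter, Finset.mem_powerset]
          constructor
          · rintro ⟨h1, h3⟩
            intro a ha
            exact Finset.mem_erase.2 ⟨(Finset.mem_erase.1 (h1 ha)).1, h3 ha⟩
          · intro h
            refine ⟨fun a ha => Finset.mem_erase.2
              ⟨(Finset.mem_erase.1 (h ha)).1, Finset.mem_univ a⟩,
              fun a ha => (Finset.mem_erase.1 (h ha)).2⟩
        simp only [mul_ite, mul_one, mul_zero]
        rw [← Finset.sum_filter, hpow, Finset.sum_powerset_neg_one_pow_card]
    _ = ((B.filter (fun X => (sk X).erase t = ∅)).card : ℤ) := by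
        rw [Finset.sum_boole]
    _ = _ := by
        have heq : (B.filter (fun X => (sk X).erase t = ∅))
            = A.powerset.filter
                (fun X => IsOutBranching X s ∧ ∀ v : V, (∀ e ∈ X, e.1 ≠ v) → v = t) := by
          rw [hB, Finset.filter_filter]
          refine Finset.filter_congr fun X _ => ?_
          refine and_congr_right fun _ => ?_
          constructor
          · intro h1 v hv
            by_contra hvt
            have : v ∈ (sk X).erase t := Finset.mem_erase.2 ⟨hvt, (hmemsk X v).2 hv⟩
            simp [h1] at this
          · intro h1
            ext v
            simp only [Finset.mem_erase, Finset.notMem_empty, iff_false, not_and]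
            intro hvt hv
            exact hvt (h1 v ((hmemsk X v).1 hv))
        rw [heq]
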